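/- (Colouring algorithm) Let Q be a countable quasi-order, let n ≥ 1, and let Φ ⊆ Qⁿ be an n-ary relation on Q. Then Q is thin if and only if both of the following S-invariant sets carry Borel 3-colourable subgraphs: A_Φ = {X ∈ Q⃗ : ∀ k, Φ(X(k),…,X(k+n−1))} and A_{¬Φ} = {X ∈ Q⃗ : ∀ k, ¬Φ(X(k),…,X(k+n−1))}; that is, Q is thin iff for each of these two sets A there is a Borel map c : A → {0,1,2} with c(X) ≠ c(S(X)) for all X ∈ A. -/

import Mathlib

/-- The shift map on sequences. -/
def seqShift {Q : Type*} (X : ℕ → Q) : ℕ → Q := fun k => X (k + 1)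

/-- The set `Q⃗` of sequences `X` with `¬ r (X k) (X (k+1))` for all `k`. -/
def vecSet {Q : Type*} (r : Q → Q → Prop) : Set (ℕ → Q) :=
  {X | ∀ k, ¬ r (X k) (X (k + 1))}

/-- The shift graph on a subset `A` of `Qᴺ` (with `Q` discrete, `Qᴺ` carrying the product
Borel structure) admits a Borel proper 3-colouring. -/
def Colour3 {Q : Type*} (A : Set (ℕ → Q)) : Prop :=
  letI : MeasurableSpace Q := ⊤
  ∃ c : A → Fin 3, Measurable c ∧
    ∀ (X : ℕ → Q) (hX : X ∈ A) (hX' : seqShift X ∈ A),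
      c ⟨X, hX⟩ ≠ c ⟨seqShift X, hX'⟩

/-- A relation `r` on `Q` is *thin* if the shift graph on `Q⃗ = vecSet r`
is Borel 3-colourable; otherwise it is *thick*. -/
def IsThin {Q : Type*} (r : Q → Q → Prop) : Prop := Colour3 (vecSet r)

section Auxil

variable {Q : Type*}

local instance instQTop : MeasurableSpace Q := ⊤

local instance instQSingleton : MeasurableSingletonClass Q :=
  ⟨fun _ => MeasurableSpace.measurableSet_top⟩

lemma ca_measurable_seqShift : Measurable (seqShift : (ℕ → Q) → ℕ → Q) :=
  measurable_pi_lambda _ fun k => measurable_pi_apply (k + 1)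

lemma ca_vecSet_shift {r : Q → Q → Prop} {X : ℕ → Q} (hX : X ∈ vecSet r) :
    seqShift X ∈ vecSet r := fun k => hX (k + 1)

lemma ca_vecSet_shift_iterate {r : Q → Q → Prop} {X : ℕ → Q} (hX : X ∈ vecSet r) (i : ℕ) :
    seqShift^[i] X ∈ vecSet r := by
  induction i with
  | zero => exact hX
  | succ i ih => rw [Function.iterate_succ_apply']; exact ca_vecSet_shift ih

lemma ca_measurableSet_vecSet [Countable Q] (r : Q → Q → Prop) :
    MeasurableSet (vecSet r) := by
  have h : vecSet r
      = ⋂ k, (fun X : ℕ → Q => (X k, X (k + 1))) ⁻¹' {p : Q × Q | ¬ r p.1 p.2} := by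
    ext X; simp [vecSet]
  rw [h]
  exact MeasurableSet.iInter fun k =>
    ((measurable_pi_apply k).prodMk (measurable_pi_apply (k + 1)))
      ((Set.to_countable _).measurableSet)

/-- `sInf` of a pointwise set of naturals is measurable. -/
lemma ca_measurable_sInf {α : Type*} [MeasurableSpace α] (p : α → ℕ → Prop)
    (hp : ∀ k, MeasurableSet {x | p x k}) :
    Measurable fun x => sInf {k | p x k} := by
  apply measurable_to_countable'
  intro i
  have key : (fun x => sInf {k | p x k}) ⁻¹' {i}
      = ({x | p x i} ∩ ⋂ j, ⋂ _ : j < i, {x | ¬ p x j})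
        ∪ ({x : α | i = 0} ∩ ⋂ j, {x | ¬ p x j}) := by
    ext x
    simp only [Set.mem_preimage, Set.mem_singleton_iff, Set.mem_union, Set.mem_inter_iff,
      Set.mem_iInter, Set.mem_setOf_eq]
    constructor
    · rintro rfl
      by_cases hne : {k | p x k}.Nonempty
      · exact Or.inl ⟨Nat.sInf_mem hne, fun j hj => Nat.notMem_of_lt_sInf hj⟩
      · refine Or.inr ⟨?_, fun j hj => hne ⟨j, hj⟩⟩
        rw [Set.not_nonempty_iff_eq_empty.mp hne, Nat.sInf_empty]
    · rintro (⟨hi, hlt⟩ | ⟨h0, hall⟩)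
      · refine le_antisymm (Nat.sInf_le hi) ?_
        by_contra hc
        push_neg at hc
        exact hlt _ hc (Nat.sInf_mem ⟨i, hi⟩)
      · have he : {k | p x k} = ∅ := Set.eq_empty_iff_forall_notMem.mpr hall
        rw [he, Nat.sInf_empty, h0]
  rw [key]
  refine MeasurableSet.union ?_ ?_
  · exact (hp i).inter (MeasurableSet.iInter fun j => MeasurableSet.iInter fun _ => (hp j).compl)
  · refine MeasurableSet.inter ?_ (MeasurableSet.iInter fun j => (hp j).compl)
    by_cases h0 : i = 0
    · simp [h0]
    · simp [h0]

/-- Case split along a measurable ℕ-valued function preserves measurability. -/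
lemma ca_measurable_cases {α β : Type*} [MeasurableSpace α] [MeasurableSpace β]
    [Countable β] [MeasurableSingletonClass β]
    {m : α → ℕ} (hm : Measurable m) {f : ℕ → α → β} (hf : ∀ i, Measurable (f i)) :
    Measurable fun x => f (m x) x := by
  apply measurable_to_countable'
  intro y
  have key : (fun x => f (m x) x) ⁻¹' {y} = ⋃ i, (m ⁻¹' {i}) ∩ (f i ⁻¹' {y}) := by
    ext x
    simp only [Set.mem_preimage, Set.mem_singleton_iff, Set.mem_iUnion, Set.mem_inter_iff]
    constructor
    · intro h; exact ⟨m x, rfl, h⟩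
    · rintro ⟨i, hi, h⟩; rw [hi]; exact h
  rw [key]
  exact MeasurableSet.iUnion fun i =>
    (hm (measurableSet_singleton i)).inter ((hf i) (measurableSet_singleton y))

lemma ca_fin3_succ_ne : ∀ x : Fin 3, x + 1 ≠ x := by decide

open Fin.NatCast in
/-- Colouring of the `t`-homogeneous tail piece. -/
lemma ca_piece_colour [Countable Q] (r : Q → Q → Prop) (b : (ℕ → Q) → ℕ → Bool)
    (hbm : ∀ k, Measurable fun X : ℕ → Q => b X k)
    (hbs : ∀ (X : ℕ → Q) (k : ℕ), b (seqShift X) k = b X (k + 1)) (t : Bool)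
    (h : Colour3 {X : ℕ → Q | X ∈ vecSet r ∧ ∀ k, b X k = t}) :
    ∃ g : (ℕ → Q) → Fin 3, Measurable g ∧
      ∀ X : ℕ → Q, X ∈ vecSet r → (∃ k, ∀ j, b X (k + j) = t) →
        g X ≠ g (seqShift X) := by
  classical
  set A : Set (ℕ → Q) := {X : ℕ → Q | X ∈ vecSet r ∧ ∀ k, b X k = t} with hA
  obtain ⟨c, hcm, hcp⟩ := h
  have hAmeas : MeasurableSet A := by
    have hrew : A = vecSet r ∩ ⋂ k, (fun X : ℕ → Q => b X k) ⁻¹' {t} := by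
      ext X; simp [hA, Set.mem_iInter]
    rw [hrew]
    exact (ca_measurableSet_vecSet r).inter
      (MeasurableSet.iInter fun k => (hbm k) (measurableSet_singleton t))
  set chat : (ℕ → Q) → Fin 3 := Function.extend (Subtype.val : A → (ℕ → Q)) c fun _ => 0
    with hchat
  have hchatm : Measurable chat :=
    (MeasurableEmbedding.subtype_coe hAmeas).measurable_extend hcm measurable_const
  have hchat_eq : ∀ (X : ℕ → Q) (hX : X ∈ A), chat X = c ⟨X, hX⟩ := fun X hX =>
    Subtype.val_injective.extend_apply c (fun _ => (0 : Fin 3)) (⟨X, hX⟩ : A)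
  have hbiter : ∀ (Y : ℕ → Q) (i k : ℕ), b (seqShift^[i] Y) k = b Y (k + i) := by
    intro Y i
    induction i generalizing Y with
    | zero => intro k; simp
    | succ i ih =>
        intro k
        rw [Function.iterate_succ_apply, ih (seqShift Y), hbs]
        exact congrArg (b Y) (by omega)
  set m : (ℕ → Q) → ℕ := fun X => sInf {k | ∀ j, b X (k + j) = t} with hm
  have hmm : Measurable m := by
    apply ca_measurable_sInf
    intro k
    have hrew : {x : ℕ → Q | ∀ j, b x (k + j) = t}
        = ⋂ j, (fun X : ℕ → Q => b X (k + j)) ⁻¹' {t} := by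
      ext X; simp [Set.mem_iInter]
    rw [hrew]
    exact MeasurableSet.iInter fun j => (hbm (k + j)) (measurableSet_singleton t)
  have hup : ∀ (X : ℕ → Q) (k : ℕ), (∀ j, b X (k + j) = t) → ∀ j, b X (k + 1 + j) = t := by
    intro X k hk j
    have hx := hk (j + 1)
    rwa [show k + (j + 1) = k + 1 + j by omega] at hx
  have hSset : ∀ X : ℕ → Q, {k | ∀ j, b (seqShift X) (k + j) = t}
      = {k | ∀ j, b X (k + 1 + j) = t} := by
    intro X
    ext k
    constructor
    · intro hk j
      have hx := hk j
      rwa [hbs, show k + j + 1 = k + 1 + j by omega] at hx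
    · intro hk j
      rw [hbs, show k + j + 1 = k + 1 + j by omega]
      exact hk j
  have hmshift : ∀ X : ℕ → Q, (∃ k, ∀ j, b X (k + j) = t) → m (seqShift X) = m X - 1 := by
    intro X hne
    have hne' : {k | ∀ j, b X (k + j) = t}.Nonempty := hne
    have hmem : m X ∈ {k | ∀ j, b X (k + j) = t} := Nat.sInf_mem hne'
    show sInf {k | ∀ j, b (seqShift X) (k + j) = t} = m X - 1
    rw [hSset X]
    by_cases h0 : m X = 0
    · rw [h0]
      have h0' : (0 : ℕ) ∈ {k | ∀ j, b X (k + j) = t} := h0 ▸ hmem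
      have h1 : (0 : ℕ) ∈ {k : ℕ | ∀ j, b X (k + 1 + j) = t} := hup X 0 h0'
      exact Nat.sInf_eq_zero.mpr (Or.inl h1)
    · have hilt : (m X - 1) ∈ {k : ℕ | ∀ j, b X (k + 1 + j) = t} := by
        intro j
        have hx := hmem j
        rwa [show m X + j = m X - 1 + 1 + j by omega] at hx
      refine le_antisymm (Nat.sInf_le hilt) ?_
      refine le_csInf ⟨m X - 1, hilt⟩ ?_
      intro k hk
      have hk1 : k + 1 ∈ {k | ∀ j, b X (k + j) = t} := fun j => hk j
      have h2 : m X ≤ k + 1 := Nat.sInf_le hk1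
      omega
  have htail : ∀ X : ℕ → Q, X ∈ vecSet r → (∃ k, ∀ j, b X (k + j) = t) →
      seqShift^[m X] X ∈ A := by
    intro X hX hne
    have hbX : ∀ j, b X (m X + j) = t := Nat.sInf_mem hne
    refine ⟨ca_vecSet_shift_iterate hX (m X), ?_⟩
    intro k
    rw [hbiter X (m X) k]
    have hx := hbX k
    rwa [show m X + k = k + m X by omega] at hx
  refine ⟨fun X => chat (seqShift^[m X] X) + (m X : Fin 3), ?_, ?_⟩
  · -- measurability
    exact ca_measurable_cases hmm
      (f := fun i (Y : ℕ → Q) => chat (seqShift^[i] Y) + (i : Fin 3))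
      (fun i => (measurable_from_top (f := fun v : Fin 3 => v + (i : Fin 3))).comp
        (hchatm.comp (ca_measurable_seqShift.iterate i)))
  · -- properness
    intro X hX hne
    have hmS : m (seqShift X) = m X - 1 := hmshift X hne
    show chat (seqShift^[m X] X) + ((m X : ℕ) : Fin 3)
      ≠ chat (seqShift^[m (seqShift X)] (seqShift X)) + ((m (seqShift X) : ℕ) : Fin 3)
    by_cases h0 : m X = 0
    · -- m X = 0 : both in A, use c
      have hmem : ∀ j, b X (m X + j) = t := Nat.sInf_mem hne
      rw [h0] at hmem
      have hXA : X ∈ A := ⟨hX, fun k => by have hx := hmem k; rwa [Nat.zero_add] at hx⟩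
      have hSXA : seqShift X ∈ A :=
        ⟨ca_vecSet_shift hX, fun k => by rw [hbs]; exact hXA.2 (k + 1)⟩
      have hmS0 : m (seqShift X) = 0 := by rw [hmS, h0]
      rw [h0, hmS0]
      simp only [Function.iterate_zero_apply, Nat.cast_zero, add_zero]
      rw [hchat_eq X hXA, hchat_eq (seqShift X) hSXA]
      exact hcp X hXA hSXA
    · -- m X > 0
      have hiter : seqShift^[m (seqShift X)] (seqShift X) = seqShift^[m X] X := by
        rw [hmS, ← Function.iterate_succ_apply]
        congr 1
        omega
      rw [hiter]
      intro hEq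
      have hcast : ((m X : ℕ) : Fin 3) = ((m (seqShift X) : ℕ) : Fin 3) :=
        add_left_cancel hEq
      have hmS' : m X = (m X - 1) + 1 := by omega
      rw [hmS, hmS'] at hcast
      push_cast at hcast
      exact ca_fin3_succ_ne ((m X - 1 : ℕ) : Fin 3) hcast

/-- Colouring of the oscillating piece. -/
lemma ca_osc_colour [Countable Q] (b : (ℕ → Q) → ℕ → Bool)
    (hbm : ∀ k, Measurable fun X : ℕ → Q => b X k)
    (hbs : ∀ (X : ℕ → Q) (k : ℕ), b (seqShift X) k = b X (k + 1)) :
    ∃ g : (ℕ → Q) → Fin 3, Measurable g ∧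
      ∀ X : ℕ → Q, (∀ k, ∃ j, b X (k + j) = true) → (∀ k, ∃ j, b X (k + j) = false) →
        g X ≠ g (seqShift X) := by
  classical
  set kf : (ℕ → Q) → ℕ := fun X => sInf {k | b X k ≠ b X (k + 1)} with hkf
  have hkfm : Measurable kf := by
    apply ca_measurable_sInf
    intro k
    have hrew : {x : ℕ → Q | b x k ≠ b x (k + 1)}
        = (fun X : ℕ → Q => (b X k, b X (k + 1))) ⁻¹' {p : Bool × Bool | p.1 ≠ p.2} := by
      ext X; simp
    rw [hrew]
    exact ((hbm k).prodMk (hbm (k + 1))) ((Set.to_countable _).measurableSet)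
  set g : (ℕ → Q) → Fin 3 := fun X =>
    if Odd (kf X) then 2 else (if b X 0 = true then 0 else 1) with hg
  have hgm : Measurable g := by
    refine Measurable.ite ?_ measurable_const (Measurable.ite ?_ measurable_const
      measurable_const)
    · exact hkfm (show MeasurableSet {n : ℕ | Odd n} from MeasurableSpace.measurableSet_top)
    · exact (hbm 0) (measurableSet_singleton true)
  refine ⟨g, hgm, ?_⟩
  intro X hT hF
  have hosc : ∀ Y : ℕ → Q, (∀ k, ∃ j, b Y (k + j) = true) → (∀ k, ∃ j, b Y (k + j) = false) →
      {k | b Y k ≠ b Y (k + 1)}.Nonempty := by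
    intro Y h1 h0
    by_contra hc
    rw [Set.not_nonempty_iff_eq_empty, Set.eq_empty_iff_forall_notMem] at hc
    have hconst : ∀ k, b Y k = b Y 0 := by
      intro k
      induction k with
      | zero => rfl
      | succ k ih =>
          have hck := hc k
          simp only [Set.mem_setOf_eq, not_not] at hck
          rw [← hck, ih]
    cases hb0 : b Y 0 with
    | true =>
        obtain ⟨j, hj⟩ := h0 0
        rw [hconst (0 + j), hb0] at hj
        exact Bool.noConfusion hj
    | false =>
        obtain ⟨j, hj⟩ := h1 0
        rw [hconst (0 + j), hb0] at hj
        exact Bool.noConfusion hj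
  have hneX : {k | b X k ≠ b X (k + 1)}.Nonempty := hosc X hT hF
  have hSset : {k | b (seqShift X) k ≠ b (seqShift X) (k + 1)}
      = {k | b X (k + 1) ≠ b X (k + 1 + 1)} := by
    ext k; simp only [Set.mem_setOf_eq, hbs]
  have hmemX : b X (kf X) ≠ b X (kf X + 1) := Nat.sInf_mem hneX
  have hkfS : kf X > 0 → kf (seqShift X) = kf X - 1 := by
    intro hpos
    show sInf {k | b (seqShift X) k ≠ b (seqShift X) (k + 1)} = kf X - 1
    rw [hSset]
    have hmem : (kf X - 1) ∈ {k | b X (k + 1) ≠ b X (k + 1 + 1)} := by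
      show b X (kf X - 1 + 1) ≠ b X (kf X - 1 + 1 + 1)
      rw [show kf X - 1 + 1 = kf X by omega]
      exact hmemX
    refine le_antisymm (Nat.sInf_le hmem) ?_
    refine le_csInf ⟨kf X - 1, hmem⟩ ?_
    intro k hk
    have hk1 : (k + 1) ∈ {k | b X k ≠ b X (k + 1)} := hk
    have h2 : kf X ≤ k + 1 := Nat.sInf_le hk1
    omega
  by_cases hodd : Odd (kf X)
  · -- g X = 2, kf (seqShift X) even
    have hpos : kf X > 0 := by
      rcases hodd with ⟨w, hw⟩; omega
    have hS : kf (seqShift X) = kf X - 1 := hkfS hpos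
    have hSeven : ¬ Odd (kf (seqShift X)) := by
      rw [hS]
      rintro ⟨u, hu⟩
      rcases hodd with ⟨w, hw⟩
      omega
    rw [hg]
    simp only [hodd, if_true, hSeven, if_false]
    split <;> decide
  · by_cases hpos : kf X > 0
    · -- kf X even positive, kf (seqShift X) odd
      have hS : kf (seqShift X) = kf X - 1 := hkfS hpos
      have hSodd : Odd (kf (seqShift X)) := by
        rw [hS]
        rcases Nat.even_or_odd (kf X) with he | ho
        · rcases he with ⟨w, hw⟩
          exact ⟨w - 1, by omega⟩
        · exact absurd ho hodd
      rw [hg]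
      simp only [hodd, if_false, hSodd, if_true]
      split <;> decide
    · -- kf X = 0 : b X 0 ≠ b X 1
      have hkf0 : kf X = 0 := by omega
      have hne01 : b X 0 ≠ b X 1 := by
        have hx := hmemX
        rwa [hkf0] at hx
      have hbS0 : b (seqShift X) 0 = b X 1 := hbs X 0
      rw [hg]
      simp only [hodd, if_false]
      by_cases hSodd : Odd (kf (seqShift X))
      · simp only [hSodd, if_true]
        split <;> decide
      · simp only [hSodd, if_false]
        rw [hbS0]
        cases h0 : b X 0 with
        | true =>
            have h1 : b X 1 = false := by
              cases h1 : b X 1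
              · rfl
              · exact absurd (h0.trans h1.symm) hne01
            rw [h1]
            decide
        | false =>
            have h1 : b X 1 = true := by
              cases h1 : b X 1
              · exact absurd (h0.trans h1.symm) hne01
              · rfl
            rw [h1]
            decide

/-- Combining the three pieces. -/
lemma ca_combine [Countable Q] (r : Q → Q → Prop) (b : (ℕ → Q) → ℕ → Bool)
    (hbm : ∀ k, Measurable fun X : ℕ → Q => b X k)
    (hbs : ∀ (X : ℕ → Q) (k : ℕ), b (seqShift X) k = b X (k + 1))
    (h1 : Colour3 {X : ℕ → Q | X ∈ vecSet r ∧ ∀ k, b X k = true})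
    (h0 : Colour3 {X : ℕ → Q | X ∈ vecSet r ∧ ∀ k, b X k = false}) :
    IsThin r := by
  classical
  obtain ⟨gT, hgTm, hgTp⟩ := ca_piece_colour r b hbm hbs true h1
  obtain ⟨gF, hgFm, hgFp⟩ := ca_piece_colour r b hbm hbs false h0
  obtain ⟨gC, hgCm, hgCp⟩ := ca_osc_colour b hbm hbs
  set pT : Set (ℕ → Q) := {X | ∃ k, ∀ j, b X (k + j) = true} with hpT
  set pF : Set (ℕ → Q) := {X | ∃ k, ∀ j, b X (k + j) = false} with hpF
  have hmeas : ∀ t : Bool, MeasurableSet {X : ℕ → Q | ∃ k, ∀ j, b X (k + j) = t} := by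
    intro t
    have hrew : {X : ℕ → Q | ∃ k, ∀ j, b X (k + j) = t}
        = ⋃ k, ⋂ j, (fun X : ℕ → Q => b X (k + j)) ⁻¹' {t} := by
      ext X; simp [Set.mem_iUnion, Set.mem_iInter]
    rw [hrew]
    exact MeasurableSet.iUnion fun k =>
      MeasurableSet.iInter fun j => (hbm (k + j)) (measurableSet_singleton t)
  have hinv : ∀ (t : Bool) (X : ℕ → Q),
      (∃ k, ∀ j, b X (k + j) = t) ↔ (∃ k, ∀ j, b (seqShift X) (k + j) = t) := by
    intro t X
    constructor
    · rintro ⟨k, hk⟩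
      refine ⟨k, fun j => ?_⟩
      rw [hbs]
      have hx := hk (j + 1)
      rwa [show k + (j + 1) = k + j + 1 by omega] at hx
    · rintro ⟨k, hk⟩
      refine ⟨k + 1, fun j => ?_⟩
      have hx := hk j
      rwa [hbs, show k + j + 1 = k + 1 + j by omega] at hx
  set g : (ℕ → Q) → Fin 3 := fun X => if X ∈ pT then gT X else if X ∈ pF then gF X else gC X
    with hg
  have hgm : Measurable g :=
    Measurable.ite (hmeas true) hgTm (Measurable.ite (hmeas false) hgFm hgCm)
  refine ⟨fun x => g x.1, hgm.comp measurable_subtype_coe, ?_⟩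
  intro X hX hX'
  show g X ≠ g (seqShift X)
  by_cases hT : X ∈ pT
  · have hT' : seqShift X ∈ pT := (hinv true X).mp hT
    rw [hg]
    simp only [hT, if_true, hT', if_true]
    exact hgTp X hX hT
  · have hT' : seqShift X ∉ pT := fun hc => hT ((hinv true X).mpr hc)
    by_cases hF : X ∈ pF
    · have hF' : seqShift X ∈ pF := (hinv false X).mp hF
      rw [hg]
      simp only [hT, if_false, hT', hF, if_true, hF']
      exact hgFp X hX hF
    · have hF' : seqShift X ∉ pF := fun hc => hF ((hinv false X).mpr hc)
      rw [hg]
      simp only [hT, if_false, hT', hF, hF']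
      have hosc1 : ∀ k, ∃ j, b X (k + j) = false := by
        intro k
        by_contra hc
        push_neg at hc
        exact hT ⟨k, fun j => by
          have hj := hc j
          cases hb : b X (k + j)
          · exact absurd hb hj
          · rfl⟩
      have hosc2 : ∀ k, ∃ j, b X (k + j) = true := by
        intro k
        by_contra hc
        push_neg at hc
        exact hF ⟨k, fun j => by
          have hj := hc j
          cases hb : b X (k + j)
          · rfl
          · exact absurd hb hj⟩
      exact hgCp X hosc2 hosc1

/-- Restriction of a thin colouring to a subset. -/
lemma ca_restrict {r : Q → Q → Prop} (h : IsThin r) (A : Set (ℕ → Q))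
    (hA : ∀ X ∈ A, X ∈ vecSet r) : Colour3 A := by
  obtain ⟨c, hcm, hcp⟩ := h
  refine ⟨fun x => c ⟨x.1, hA x.1 x.2⟩, ?_, ?_⟩
  · exact hcm.comp (Measurable.subtype_mk measurable_subtype_coe)
  · intro X hX hX'
    exact hcp X (hA X hX) (hA _ hX')

end Auxil

/-- The colouring algorithm: for a countable quasi-order `Q` and an `n`-ary relation `Φ` on `Q`
(`n ≥ 1`), `Q` is thin iff both the `Φ`-homogeneous and the `¬Φ`-homogeneous parts of `Q⃗`
carry Borel 3-colourable shift (sub)graphs. -/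
theorem colouring_algorithm {Q : Type*} [Countable Q]
    (r : Q → Q → Prop) (hr : Reflexive r) (ht : Transitive r)
    (n : ℕ) (hn : 1 ≤ n) (Φ : (Fin n → Q) → Prop) :
    IsThin r ↔
      (Colour3 {X : ℕ → Q | X ∈ vecSet r ∧ ∀ k, Φ (fun i => X (k + i))} ∧
       Colour3 {X : ℕ → Q | X ∈ vecSet r ∧ ∀ k, ¬ Φ (fun i => X (k + i))}) := by
  classical
  letI : MeasurableSpace Q := ⊤
  haveI : MeasurableSingletonClass Q := ⟨fun _ => MeasurableSpace.measurableSet_top⟩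
  constructor
  · intro h
    exact ⟨ca_restrict h _ (fun X hX => hX.1), ca_restrict h _ (fun X hX => hX.1)⟩
  · rintro ⟨h1, h0⟩
    set b : (ℕ → Q) → ℕ → Bool := fun X k => decide (Φ (fun i => X (k + i))) with hb
    have hbiff : ∀ (X : ℕ → Q) (k : ℕ), b X k = true ↔ Φ (fun i => X (k + i)) := by
      intro X k
      simp [hb]
    have hbm : ∀ k, Measurable fun X : ℕ → Q => b X k := by
      intro k
      have hco : (fun X : ℕ → Q => b X k)
          = (fun f : Fin n → Q => decide (Φ f)) ∘ (fun X i => X (k + i)) := rfl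
      rw [hco]
      have hm2 : Measurable fun X : ℕ → Q => (fun i : Fin n => X (k + i)) :=
        measurable_pi_lambda _ fun i => measurable_pi_apply (k + i)
      have hm1 : Measurable fun f : Fin n → Q => decide (Φ f) := fun s _ =>
        (Set.to_countable _).measurableSet
      exact hm1.comp hm2
    have hbs : ∀ (X : ℕ → Q) (k : ℕ), b (seqShift X) k = b X (k + 1) := by
      intro X k
      have hfe : (fun i : Fin n => seqShift X (k + i)) = fun i : Fin n => X (k + 1 + i) :=
        funext fun i => congrArg X (by omega)
      simp only [hb, hfe]
    apply ca_combine r b hbm hbs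
    · have hrew : {X : ℕ → Q | X ∈ vecSet r ∧ ∀ k, b X k = true}
          = {X : ℕ → Q | X ∈ vecSet r ∧ ∀ k, Φ (fun i => X (k + i))} := by
        ext X
        simp only [Set.mem_setOf_eq, and_congr_right_iff]
        intro _
        exact forall_congr' fun k => hbiff X k
      rw [hrew]
      exact h1
    · have hrew : {X : ℕ → Q | X ∈ vecSet r ∧ ∀ k, b X k = false}
          = {X : ℕ → Q | X ∈ vecSet r ∧ ∀ k, ¬ Φ (fun i => X (k + i))} := by
        ext X
        simp only [Set.mem_setOf_eq, and_congr_right_iff]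
        intro _
        refine forall_congr' fun k => ?_
        rw [← hbiff X k]
        simp
      rw [hrew]
      exact h0
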